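/- Every selective subset of the gadget graph G_θ has cardinality at least 2n + m: for each variable x_i it must contain a red vertex from {x_{i,1}, x̄_{i,1}} and a blue vertex from {x_{i,2}, x_{i,3}, x̄_{i,2}, x̄_{i,3}}, and for each clause c_j it must contain a red vertex from {c_{j,1}, c_{j,2}}. -/

import Mathlib

/-- The set of nearest neighbors of `v` in `U` with respect to hop-distance in `G`:
`N̂(v,U) = {u ∈ U : d(v,u) = min_{w ∈ U} d(v,w)}` (empty if `U` is empty). -/
def NearestSet {V : Type*} (G : SimpleGraph V) (v : V) (U : Set V) : Set V :=
  {u | u ∈ U ∧ ∀ w ∈ U, G.dist v u ≤ G.dist v w}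

/-- `S` is a selective subset of `(G, C)`: every vertex `v` has, among its nearest
neighbors in `S ∪ (V ∖ V_{C v})`, at least one vertex of its own color. -/
def IsSelective {V α : Type*} (G : SimpleGraph V) (C : V → α) (S : Set V) : Prop :=
  ∀ v : V, ∃ u ∈ NearestSet G v (S ∪ {w | C w ≠ C v}), C u = C v

/-- Vertices of the gadget graph `G_θ` for a monotone 3-CNF formula with `n` variables and
`m` clauses. `var i s k` is `x_{i,k+1}` when `s = true` and `x̄_{i,k+1}` when `s = false`;
`cl j k` is the clause vertex `c_{j,k+1}`. -/
inductive GVert (n m : ℕ) where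
  | var (i : Fin n) (s : Bool) (k : Fin 3)
  | cl (j : Fin m) (k : Fin 3)
deriving DecidableEq

/-- The edges of the gadget graph `G_θ` (up to symmetry). The formula is described by
`pos j` (true iff clause `j` is positive) and `lit j` (its three variables). -/
def gadgetRel {n m : ℕ} (pos : Fin m → Bool) (lit : Fin m → Fin 3 → Fin n)
    (a b : GVert n m) : Prop :=
  -- literal paths x_{i,1}x_{i,2}, x_{i,2}x_{i,3}, x̄_{i,1}x̄_{i,2}, x̄_{i,2}x̄_{i,3}
  (∃ (i : Fin n) (s : Bool),
      (a = GVert.var i s 0 ∧ b = GVert.var i s 1) ∨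
      (a = GVert.var i s 1 ∧ b = GVert.var i s 2)) ∨
  -- cross edges x_{i,1}x̄_{i,1}, x_{i,2}x̄_{i,3}, x_{i,3}x̄_{i,2}, x_{i,3}x̄_{i,3}
  (∃ i : Fin n,
      (a = GVert.var i true 0 ∧ b = GVert.var i false 0) ∨
      (a = GVert.var i true 1 ∧ b = GVert.var i false 2) ∨
      (a = GVert.var i true 2 ∧ b = GVert.var i false 1) ∨
      (a = GVert.var i true 2 ∧ b = GVert.var i false 2)) ∨
  -- clause paths c_{j,1}c_{j,2}, c_{j,2}c_{j,3}
  (∃ j : Fin m,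
      (a = GVert.cl j 0 ∧ b = GVert.cl j 1) ∨
      (a = GVert.cl j 1 ∧ b = GVert.cl j 2)) ∨
  -- clause-literal edges c_{j,3} to the third vertex of each of its literal paths
  (∃ (j : Fin m) (k : Fin 3), a = GVert.cl j 2 ∧ b = GVert.var (lit j k) (pos j) 2)

/-- The gadget graph `G_θ`. -/
def gadgetGraph {n m : ℕ} (pos : Fin m → Bool) (lit : Fin m → Fin 3 → Fin n) :
    SimpleGraph (GVert n m) :=
  SimpleGraph.fromRel (gadgetRel pos lit)

/-- The 2-coloring of `G_θ`: `true` = red, `false` = blue. `x_{i,1}, x̄_{i,1}` and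
`c_{j,1}, c_{j,2}` are red; all other vertices are blue. -/
def gadgetColor {n m : ℕ} : GVert n m → Bool
  | GVert.var _ _ k => k == 0
  | GVert.cl _ k => !(k == 2)

open SimpleGraph

-- AUX
def GVert.toSum {n m : ℕ} : GVert n m → (Fin n × Bool × Fin 3) ⊕ (Fin m × Fin 3)
  | .var i s k => .inl (i, s, k)
  | .cl j k => .inr (j, k)

lemma GVert.toSum_inj {n m : ℕ} : Function.Injective (GVert.toSum (n := n) (m := m)) := by
  intro a b h
  cases a <;> cases b <;> simp [GVert.toSum] at h <;> simp_all

instance {n m : ℕ} : Finite (GVert n m) := Finite.of_injective _ GVert.toSum_inj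

section adj
variable {n m : ℕ} (pos : Fin m → Bool) (lit : Fin m → Fin 3 → Fin n)

lemma adj_var0_iff (i : Fin n) (s : Bool) (u : GVert n m) :
    (gadgetGraph pos lit).Adj (.var i s 0) u ↔ u = .var i s 1 ∨ u = .var i (!s) 0 := by
  cases s <;> simp [gadgetGraph, gadgetRel] <;> aesop

lemma adj_var1_iff (i : Fin n) (s : Bool) (u : GVert n m) :
    (gadgetGraph pos lit).Adj (.var i s 1) u ↔
      u = .var i s 0 ∨ u = .var i s 2 ∨ u = .var i (!s) 2 := by
  cases s <;> simp [gadgetGraph, gadgetRel] <;> aesop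

lemma adj_cl0_iff (j : Fin m) (u : GVert n m) :
    (gadgetGraph pos lit).Adj (.cl j 0) u ↔ u = .cl j 1 := by
  simp [gadgetGraph, gadgetRel]; aesop

lemma adj_cl1_iff (j : Fin m) (u : GVert n m) :
    (gadgetGraph pos lit).Adj (.cl j 1) u ↔ u = .cl j 0 ∨ u = .cl j 2 := by
  simp [gadgetGraph, gadgetRel]; aesop

variable (hconn : (gadgetGraph pos lit).Connected)
    (S : Set (GVert n m)) (hS : IsSelective (gadgetGraph pos lit) gadgetColor S)
include hconn hS

lemma sel_red0 (i : Fin n) : ∃ s : Bool, GVert.var i s 0 ∈ S := by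
  obtain ⟨u, ⟨hu, hmin⟩, hcol⟩ := hS (GVert.var i true 0)
  have hadj : (gadgetGraph pos lit).Adj (.var i true 0) (.var i true 1) := by
    rw [adj_var0_iff]; left; rfl
  have hb : (GVert.var i true 1 : GVert n m) ∈
      S ∪ {w | gadgetColor w ≠ gadgetColor (GVert.var (n:=n) (m:=m) i true 0)} := by
    right; simp [gadgetColor]
  have hle : (gadgetGraph pos lit).dist (.var i true 0) u ≤ 1 := by
    calc (gadgetGraph pos lit).dist (.var i true 0) u
        ≤ (gadgetGraph pos lit).dist (.var i true 0) (.var i true 1) := hmin _ hb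
      _ ≤ (SimpleGraph.Walk.cons hadj .nil).length := SimpleGraph.dist_le _
      _ = 1 := rfl
  interval_cases h : (gadgetGraph pos lit).dist (.var i true 0) u
  · have := (hconn.dist_eq_zero_iff.mp h).symm
    subst this
    rcases hu with hu | hu
    · exact ⟨true, hu⟩
    · simp at hu
  · have := (SimpleGraph.dist_eq_one_iff_adj.mp h)
    rw [adj_var0_iff] at this
    rcases this with rfl | rfl
    · simp [gadgetColor] at hcol
    · rcases hu with hu | hu
      · exact ⟨false, hu⟩
      · simp [gadgetColor] at hu

lemma sel_blue (i : Fin n) : ∃ (s : Bool) (k : Fin 3), k ≠ 0 ∧ GVert.var i s k ∈ S := by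
  obtain ⟨u, ⟨hu, hmin⟩, hcol⟩ := hS (GVert.var i true 1)
  have hadj : (gadgetGraph pos lit).Adj (.var i true 1) (.var i true 0) := by
    rw [adj_var1_iff]; left; rfl
  have hb : (GVert.var i true 0 : GVert n m) ∈
      S ∪ {w | gadgetColor w ≠ gadgetColor (GVert.var (n:=n) (m:=m) i true 1)} := by
    right; simp [gadgetColor]
  have hle : (gadgetGraph pos lit).dist (.var i true 1) u ≤ 1 := by
    calc (gadgetGraph pos lit).dist (.var i true 1) u
        ≤ (gadgetGraph pos lit).dist (.var i true 1) (.var i true 0) := hmin _ hb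
      _ ≤ (SimpleGraph.Walk.cons hadj .nil).length := SimpleGraph.dist_le _
      _ = 1 := rfl
  interval_cases h : (gadgetGraph pos lit).dist (.var i true 1) u
  · have := (hconn.dist_eq_zero_iff.mp h).symm
    subst this
    rcases hu with hu | hu
    · exact ⟨true, 1, by decide, hu⟩
    · simp at hu
  · have := (SimpleGraph.dist_eq_one_iff_adj.mp h)
    rw [adj_var1_iff] at this
    rcases this with rfl | rfl | rfl
    · simp [gadgetColor] at hcol
    · rcases hu with hu | hu
      · exact ⟨true, 2, by decide, hu⟩
      · simp [gadgetColor] at hu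
    · rcases hu with hu | hu
      · exact ⟨false, 2, by decide, hu⟩
      · simp [gadgetColor] at hu

lemma sel_cl (j : Fin m) : GVert.cl j 0 ∈ S ∨ GVert.cl j 1 ∈ S := by
  obtain ⟨u, ⟨hu, hmin⟩, hcol⟩ := hS (GVert.cl j 0)
  have ha1 : (gadgetGraph pos lit).Adj (.cl j 0) (.cl j 1) := by
    rw [adj_cl0_iff]
  have ha2 : (gadgetGraph pos lit).Adj (.cl j 1) (.cl j 2) := by
    rw [adj_cl1_iff]; right; rfl
  have hb : (GVert.cl j 2 : GVert n m) ∈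
      S ∪ {w | gadgetColor w ≠ gadgetColor (GVert.cl (n:=n) (m:=m) j 0)} := by
    right; simp [gadgetColor]
  have hle : (gadgetGraph pos lit).dist (.cl j 0) u ≤ 2 := by
    calc (gadgetGraph pos lit).dist (.cl j 0) u
        ≤ (gadgetGraph pos lit).dist (.cl j 0) (.cl j 2) := hmin _ hb
      _ ≤ (SimpleGraph.Walk.cons ha1 (SimpleGraph.Walk.cons ha2 .nil)).length :=
          SimpleGraph.dist_le _
      _ = 2 := rfl
  interval_cases h : (gadgetGraph pos lit).dist (.cl j 0) u
  · have := (hconn.dist_eq_zero_iff.mp h).symm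
    subst this
    rcases hu with hu | hu
    · exact Or.inl hu
    · simp at hu
  · have := (SimpleGraph.dist_eq_one_iff_adj.mp h)
    rw [adj_cl0_iff] at this
    subst this
    rcases hu with hu | hu
    · exact Or.inr hu
    · simp [gadgetColor] at hu
  · obtain ⟨p, hp⟩ := hconn.exists_walk_length_eq_dist (GVert.cl j 0) u
    rw [h] at hp
    cases p with
    | nil => simp at hp
    | cons hadj q =>
      rw [adj_cl0_iff] at hadj
      subst hadj
      simp [SimpleGraph.Walk.length_cons] at hp
      cases q with
      | nil => simp at hp
      | cons hadj2 r =>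
        simp [SimpleGraph.Walk.length_cons] at hp
        have := r.eq_of_length_eq_zero (SimpleGraph.Walk.nil_iff_length_eq.mp hp)
        subst this
        rw [adj_cl1_iff] at hadj2
        rcases hadj2 with rfl | rfl
        · simp [SimpleGraph.dist_self] at h
        · simp [gadgetColor] at hcol
end adj

/-- Every selective subset of `G_θ` has cardinality at least `2n + m`: for each variable
`x_i` it contains a red vertex from `{x_{i,1}, x̄_{i,1}}` and a blue vertex from
`{x_{i,2}, x_{i,3}, x̄_{i,2}, x̄_{i,3}}`, and for each clause `c_j` it contains a red
vertex from `{c_{j,1}, c_{j,2}}`. -/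
theorem stmt_12 {n m : ℕ} (pos : Fin m → Bool) (lit : Fin m → Fin 3 → Fin n)
    (hdis : ∀ j : Fin m, Function.Injective (lit j))
    (hconn : (gadgetGraph pos lit).Connected)
    (S : Set (GVert n m)) (hS : IsSelective (gadgetGraph pos lit) gadgetColor S) :
    2 * n + m ≤ S.ncard ∧
      (∀ i : Fin n,
        (∃ s : Bool, GVert.var i s 0 ∈ S) ∧
        (∃ (s : Bool) (k : Fin 3), k ≠ 0 ∧ GVert.var i s k ∈ S)) ∧
      (∀ j : Fin m, GVert.cl j 0 ∈ S ∨ GVert.cl j 1 ∈ S) := by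
  classical
  have h1 := fun i => sel_red0 pos lit hconn S hS i
  have h2 := fun i => sel_blue pos lit hconn S hS i
  have h3 := fun j => sel_cl pos lit hconn S hS j
  refine ⟨?_, fun i => ⟨h1 i, h2 i⟩, h3⟩
  choose f hf using h1
  choose g k hk hgk using h2
  set c : Fin m → GVert n m := fun j => if GVert.cl j 0 ∈ S then .cl j 0 else .cl j 1 with hc
  have hcS : ∀ j, c j ∈ S := by
    intro j; simp only [hc]; split
    · assumption
    · rcases h3 j with h | h
      · tauto
      · exact h
  have hcj : ∀ j, c j = GVert.cl j 0 ∨ c j = GVert.cl j 1 := by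
    intro j; simp only [hc]; split <;> simp
  set F : (Fin n ⊕ Fin n) ⊕ Fin m → GVert n m :=
    Sum.elim (Sum.elim (fun i => .var i (f i) 0) (fun i => .var i (g i) (k i))) c with hF
  have hFS : ∀ x, F x ∈ S := by
    rintro ((i | i) | j)
    · exact hf i
    · exact hgk i
    · exact hcS j
  have hFinj : Function.Injective F := by
    rintro ((a | a) | a) ((b | b) | b) hab <;> simp only [hF, Sum.elim_inl, Sum.elim_inr] at hab
    · simp_all
    · rw [GVert.var.injEq] at hab; exact absurd hab.2.2.symm (hk b)
    · rcases hcj b with h | h <;> rw [h] at hab <;> simp at hab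
    · rw [GVert.var.injEq] at hab; exact absurd hab.2.2 (hk a)
    · simp_all
    · rcases hcj b with h | h <;> rw [h] at hab <;> simp at hab
    · rcases hcj a with h | h <;> rw [h] at hab <;> simp at hab
    · rcases hcj a with h | h <;> rw [h] at hab <;> simp at hab
    · rcases hcj a with ha | ha <;> rcases hcj b with hb | hb <;> rw [ha, hb] at hab <;>
        simp_all
  calc 2 * n + m = Fintype.card ((Fin n ⊕ Fin n) ⊕ Fin m) := by simp; ring
    _ = (Finset.image F Finset.univ).card := by
        rw [Finset.card_image_of_injective _ hFinj, Finset.card_univ]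
    _ = (↑(Finset.image F Finset.univ) : Set (GVert n m)).ncard := by
        rw [Set.ncard_coe_finset]
    _ ≤ S.ncard := by
        apply Set.ncard_le_ncard _ (Set.toFinite S)
        intro x hx
        simp only [Finset.coe_image, Finset.coe_univ, Set.image_univ, Set.mem_range] at hx
        obtain ⟨y, rfl⟩ := hx
        exact hFS y
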